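/- Let p, q ∈ ℂ. The quadratic equation λ² + pλ + q = 0 has a real root (i.e., there exists t ∈ ℝ with t² + pt + q = 0) if and only if both (Im q)² = (Im p)·(Re p · Im q − Re q · Im p) and 4·Re q ≤ |p|². -/

import Mathlib

/-- `λ² + pλ + q = 0` has a real root iff
`(Im q)² = Im p · (Re p · Im q − Re q · Im p)` and `4 Re q ≤ |p|²`. -/
theorem statement_14 (p q : ℂ) :
    (∃ t : ℝ, (t : ℂ) ^ 2 + p * t + q = 0) ↔
      (q.im ^ 2 = p.im * (p.re * q.im - q.re * p.im)
        ∧ 4 * q.re ≤ ‖p‖ ^ 2) := by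
  have habs : ‖p‖ ^ 2 = p.re ^ 2 + p.im ^ 2 := by
    rw [Complex.sq_norm, Complex.normSq_apply]; ring
  have key : ∀ t : ℝ, (t : ℂ) ^ 2 + p * t + q = 0 ↔
      (t ^ 2 + p.re * t + q.re = 0 ∧ p.im * t + q.im = 0) := by
    intro t
    rw [Complex.ext_iff]
    simp [Complex.add_re, Complex.add_im, Complex.mul_re, Complex.mul_im,
      pow_two]
  rw [habs]
  constructor
  · rintro ⟨t, ht⟩
    rw [key t] at ht
    obtain ⟨h1, h2⟩ := ht
    constructor
    · linear_combination p.im ^ 2 * h1 + (q.im - p.im * t - p.re * p.im) * h2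
    · nlinarith [sq_nonneg (p.re + 2 * t), sq_nonneg p.im]
  · rintro ⟨h1, h2⟩
    by_cases hp : p.im = 0
    · have hq : q.im = 0 := by
        have : q.im ^ 2 = 0 := by rw [h1, hp]; ring
        exact pow_eq_zero_iff (by norm_num) |>.mp this
      refine ⟨(-p.re + Real.sqrt (p.re ^ 2 - 4 * q.re)) / 2, ?_⟩
      have hnn : 0 ≤ p.re ^ 2 - 4 * q.re := by nlinarith [sq_nonneg p.im]
      have hs : Real.sqrt (p.re ^ 2 - 4 * q.re) ^ 2 = p.re ^ 2 - 4 * q.re :=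
        Real.sq_sqrt hnn
      rw [key]
      constructor
      · nlinarith [hs]
      · rw [hp, hq]; ring
    · refine ⟨-q.im / p.im, ?_⟩
      rw [key]
      constructor
      · field_simp
        linear_combination h1
      · field_simp
        ring
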